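/- For every integer j ≥ 1, the spectrum of the position operator q̂ = M^q/2 consists of exactly 2j+1 distinct eigenvalues, namely q_{±(j−k)} = ±√((j−k)(j+k)) for k = 0, 1, …, j; equivalently, the eigenvalues of M^q are precisely the 2j+1 distinct real numbers ±2√((j−k)(j+k)), k = 0, …, j (the value 0 occurring once, for k = j). -/

import Mathlib

/-- The off-diagonal coefficient `M_k`: `√(k(k+1))` if `k` is odd, and
`√((2j−k)(2j−k−1))` if `k` is even. -/
noncomputable def Mcoef (j k : ℕ) : ℝ :=
  if k % 2 = 1 then Real.sqrt ((k : ℝ) * ((k : ℝ) + 1))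
  else Real.sqrt ((2 * (j : ℝ) - (k : ℝ)) * (2 * (j : ℝ) - (k : ℝ) - 1))

/-- The symmetric tridiagonal matrix `M^q = 2q̂` with `(M^q)_{k,k+1} = (M^q)_{k+1,k} = M_k`. -/
noncomputable def Mq (j : ℕ) : Matrix (Fin (2 * j + 1)) (Fin (2 * j + 1)) ℝ :=
  fun k l =>
    if (l : ℕ) = (k : ℕ) + 1 then Mcoef j k
    else if (k : ℕ) = (l : ℕ) + 1 then Mcoef j l
    else 0

/-- The eigenvalues `ε_k = -2√((j-k)(j+k))` for `k = 0,…,j-1`, `ε_j = 0`, and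
`ε_{2j-k} = 2√((j-k)(j+k))` for `k = 0,…,j-1`. -/
noncomputable def eps (j l : ℕ) : ℝ :=
  if l < j then -(2 * Real.sqrt (((j : ℝ) - (l : ℝ)) * ((j : ℝ) + (l : ℝ))))
  else if l = j then 0
  else 2 * Real.sqrt (((j : ℝ) - ((2 * j - l : ℕ) : ℝ)) * ((j : ℝ) + ((2 * j - l : ℕ) : ℝ)))

namespace Stmt12Aux

noncomputable def Af (j s n : ℕ) : ℝ :=
  (2*(n:ℝ)+2*(s:ℝ)+1) * (2*(j:ℝ)-2*(n:ℝ)-2*(s:ℝ)-2)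
noncomputable def Bf (j n : ℕ) : ℝ := (2*(n:ℝ)) * (2*(j:ℝ)-2*(n:ℝ)-1)
noncomputable def sA (j s n : ℕ) : ℝ := Real.sqrt (Af j s n)
noncomputable def sB (j n : ℕ) : ℝ := Real.sqrt (Bf j n)

lemma sB_zero (j : ℕ) : sB j 0 = 0 := by simp [sB, Bf]

lemma Af_shift (j s n : ℕ) : Af j s (n+1) = Af j (s+1) n := by
  unfold Af; push_cast; ring

lemma sA_shift (j s n : ℕ) : sA j s (n+1) = sA j (s+1) n := by
  rw [sA, sA, Af_shift]

lemma Af_nonneg (j s n : ℕ) (h : n + s + 1 ≤ j) : 0 ≤ Af j s n := by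
  have h' : ((n:ℝ)) + s + 1 ≤ j := by exact_mod_cast h
  unfold Af
  apply mul_nonneg <;> nlinarith

lemma Bf_nonneg (j n : ℕ) (h : n + 1 ≤ j) : 0 ≤ Bf j n := by
  have h' : ((n:ℝ)) + 1 ≤ j := by exact_mod_cast h
  unfold Bf
  apply mul_nonneg <;> nlinarith

lemma sA_sq (j s n : ℕ) (h : n + s + 1 ≤ j) : sA j s n ^ 2 = Af j s n :=
  Real.sq_sqrt (Af_nonneg j s n h)

lemma sB_sq (j n : ℕ) (h : n + 1 ≤ j) : sB j n ^ 2 = Bf j n :=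
  Real.sq_sqrt (Bf_nonneg j n h)

lemma sA_eq_zero (j s n : ℕ) (h : j ≤ n + s + 1) : sA j s n = 0 := by
  rw [sA, Real.sqrt_eq_zero']
  have h' : (j:ℝ) ≤ (n:ℝ) + s + 1 := by exact_mod_cast h
  unfold Af
  nlinarith

lemma sA_pos (j s : ℕ) (h : s + 2 ≤ j) : 0 < sA j s 0 := by
  rw [sA]
  apply Real.sqrt_pos.2
  have h' : (s:ℝ) + 2 ≤ j := by exact_mod_cast h
  unfold Af
  push_cast
  nlinarith

lemma sB_pos (j n : ℕ) (h1 : 1 ≤ n) (h2 : n + 1 ≤ j) : 0 < sB j n := by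
  rw [sB]
  apply Real.sqrt_pos.2
  have h1' : (1:ℝ) ≤ (n:ℝ) := by exact_mod_cast h1
  have h2' : ((n:ℝ)) + 1 ≤ j := by exact_mod_cast h2
  unfold Bf
  nlinarith

noncomputable def Xop (j s : ℕ) (u : ℕ → ℝ) : ℕ → ℝ :=
  fun n => sA j s n * u n - sB j n * u (n-1)
noncomputable def XTop (j s : ℕ) (u : ℕ → ℝ) : ℕ → ℝ :=
  fun n => sA j s n * u n - sB j (n+1) * u (n+1)

def Good (j s k : ℕ) (u : ℕ → ℝ) : Prop :=
  0 < u 0 ∧ (∀ n, j - s ≤ n → u n = 0) ∧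
  ∀ n, Xop j s (XTop j s u) n = (4*(k:ℝ)^2 - 4*(s:ℝ)^2) * u n

noncomputable def baseU (j k : ℕ) : ℕ → ℝ :=
  fun n => if n < j - k then (∏ i ∈ Finset.range n, (sA j k i / sB j (i+1))) else 0

lemma base_good (j k : ℕ) (hk : k + 1 ≤ j) : Good j k k (baseU j k) := by
  have h0 : baseU j k 0 = 1 := by
    rw [baseU]
    simp only [Finset.range_zero, Finset.prod_empty]
    rw [if_pos (by omega)]
  have hsupp : ∀ n, j - k ≤ n → baseU j k n = 0 := by
    intro n hn
    rw [baseU, if_neg (by omega)]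
  have hXT : ∀ n, XTop j k (baseU j k) n = 0 := by
    intro n
    rw [XTop]
    rcases lt_trichotomy (n+1) (j-k) with h | h | h
    · have hn : n < j - k := by omega
      have h1 : baseU j k (n+1)
          = baseU j k n * (sA j k n / sB j (n+1)) := by
        rw [baseU, baseU, if_pos h, if_pos hn, Finset.prod_range_succ]
      have hsBpos : 0 < sB j (n+1) := sB_pos j (n+1) (by omega) (by omega)
      rw [h1]
      field_simp
      ring
    · have hA : sA j k n = 0 := sA_eq_zero j k n (by omega)
      have hu : baseU j k (n+1) = 0 := hsupp (n+1) (by omega)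
      rw [hA, hu]; ring
    · have hu : baseU j k n = 0 := hsupp n (by omega)
      have hu' : baseU j k (n+1) = 0 := hsupp (n+1) (by omega)
      rw [hu, hu']; ring
  refine ⟨by rw [h0]; norm_num, hsupp, ?_⟩
  intro n
  rw [Xop, hXT n]
  rcases Nat.eq_zero_or_pos n with h | h
  · subst h; rw [hXT 0]; ring
  · have : n - 1 + 1 = n := by omega
    rw [show XTop j k (baseU j k) (n-1) = 0 from hXT (n-1)]; ring

lemma cross (j s : ℕ) (u' : ℕ → ℝ) (hsupp : ∀ m, j - (s+1) ≤ m → u' m = 0) :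
    ∀ n, XTop j s (Xop j s u') n
      = Xop j (s+1) (XTop j (s+1) u') n + (8*(s:ℝ)+4) * u' n := by
  intro n
  cases n with
  | zero =>
    simp only [XTop, Xop, sB_zero, Nat.zero_sub, Nat.sub_self, zero_mul, sub_zero, mul_zero]
    rw [show sA j s 1 = sA j (s+1) 0 from sA_shift j s 0]
    by_cases hj : s + 2 ≤ j
    · have e1 := sA_sq j s 0 (by omega)
      have e2 := sB_sq j 1 (by omega)
      have e3 := sA_sq j (s+1) 0 (by omega)
      have hco : sA j s 0 ^2 + sB j 1 ^2 = sA j (s+1) 0 ^2 + (8*(s:ℝ)+4) := by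
        rw [e1, e2, e3]; unfold Af Bf; push_cast; ring
      linear_combination (u' 0) * hco
    · have h0 : u' 0 = 0 := hsupp 0 (by omega)
      have h1 : u' 1 = 0 := hsupp 1 (by omega)
      rw [h0, h1]; ring
  | succ m =>
    simp only [XTop, Xop, Nat.add_sub_cancel]
    rw [show sA j s (m+1+1) = sA j (s+1) (m+1) from sA_shift j s (m+1),
        show sA j (s+1) m = sA j s (m+1) from (sA_shift j s m).symm]
    by_cases hj : m + s + 3 ≤ j
    · have e1 := sA_sq j s (m+1) (by omega)
      have e2 := sB_sq j (m+1+1) (by omega)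
      have e3 := sA_sq j (s+1) (m+1) (by omega)
      have e4 := sB_sq j (m+1) (by omega)
      have hco : sA j s (m+1) ^2 + sB j (m+1+1) ^2
          = sA j (s+1) (m+1) ^2 + sB j (m+1) ^2 + (8*(s:ℝ)+4) := by
        rw [e1, e2, e3, e4]; unfold Af Bf; push_cast; ring
      linear_combination (u' (m+1)) * hco
    · have h0 : u' (m+1) = 0 := hsupp _ (by omega)
      rw [h0]; ring

lemma step_good (j s k : ℕ) (hs : s + 1 ≤ k) (hk : k + 1 ≤ j) (u' : ℕ → ℝ)
    (h : Good j (s+1) k u') : Good j s k (Xop j s u') := by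
  obtain ⟨hpos, hsupp, hrel⟩ := h
  have hXT : ∀ n, XTop j s (Xop j s u') n = (4*(k:ℝ)^2 - 4*(s:ℝ)^2) * u' n := by
    intro n
    rw [cross j s u' hsupp n, hrel n]
    push_cast
    ring
  have hXTfun : XTop j s (Xop j s u') = fun n => (4*(k:ℝ)^2 - 4*(s:ℝ)^2) * u' n :=
    funext hXT
  refine ⟨?_, ?_, ?_⟩
  · show 0 < sA j s 0 * u' 0 - sB j 0 * u' (0-1)
    rw [sB_zero]
    have := sA_pos j s (by omega)
    nlinarith
  · intro n hn
    show sA j s n * u' n - sB j n * u' (n-1) = 0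
    rw [hsupp n (by omega), hsupp (n-1) (by omega)]
    ring
  · intro n
    rw [Xop, hXTfun]
    show sA j s n * ((4*(k:ℝ)^2 - 4*(s:ℝ)^2) * u' n)
        - sB j n * ((4*(k:ℝ)^2 - 4*(s:ℝ)^2) * u' (n-1))
        = (4*(k:ℝ)^2 - 4*(s:ℝ)^2) * Xop j s u' n
    rw [Xop]
    ring

lemma exists_good (j k : ℕ) (hk : k + 1 ≤ j) : ∃ u, Good j 0 k u := by
  have key : ∀ d, d ≤ k → ∃ u, Good j (k-d) k u := by
    intro d
    induction d with
    | zero => intro _; exact ⟨baseU j k, by simpa using base_good j k hk⟩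
    | succ m ih =>
      intro hm
      obtain ⟨u, hu⟩ := ih (by omega)
      have hs : k - m = (k - (m+1)) + 1 := by omega
      rw [hs] at hu
      exact ⟨_, step_good j (k-(m+1)) k (by omega) hk u hu⟩
  simpa using key k le_rfl

lemma Mq_mulVec (j : ℕ) (v : Fin (2*j+1) → ℝ) (i : Fin (2*j+1)) :
    (Mq j).mulVec v i
      = (if h : (i:ℕ)+1 < 2*j+1 then Mcoef j i * v ⟨(i:ℕ)+1, h⟩ else 0)
      + (if 0 < (i:ℕ) then Mcoef j ((i:ℕ)-1) * v ⟨(i:ℕ)-1, by omega⟩ else 0) := by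
  have hmv : (Mq j).mulVec v i = ∑ l : Fin (2*j+1), (Mq j) i l * v l := rfl
  have hsplit : ∀ l : Fin (2*j+1), (Mq j) i l * v l
      = (if (l:ℕ) = (i:ℕ)+1 then Mcoef j i * v l else 0)
      + (if (i:ℕ) = (l:ℕ)+1 then Mcoef j ((i:ℕ)-1) * v l else 0) := by
    intro l
    show (if (l:ℕ) = (i:ℕ)+1 then Mcoef j i
        else if (i:ℕ) = (l:ℕ)+1 then Mcoef j l else 0) * v l = _
    by_cases h1 : (l:ℕ) = (i:ℕ)+1
    · rw [if_pos h1, if_pos h1, if_neg (by omega), add_zero]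
    · rw [if_neg h1, if_neg h1, zero_add]
      by_cases h2 : (i:ℕ) = (l:ℕ)+1
      · rw [if_pos h2, if_pos h2]
        have : (i:ℕ)-1 = (l:ℕ) := by omega
        rw [this]
      · rw [if_neg h2, if_neg h2, zero_mul]
  rw [hmv, Finset.sum_congr rfl (fun l _ => hsplit l), Finset.sum_add_distrib]
  congr 1
  · by_cases hi : (i:ℕ)+1 < 2*j+1
    · rw [dif_pos hi]
      have hc : ∀ l : Fin (2*j+1),
          (if (l:ℕ) = (i:ℕ)+1 then Mcoef j i * v l else 0)
          = (if l = ⟨(i:ℕ)+1, hi⟩ then Mcoef j i * v l else 0) := by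
        intro l
        congr 1
        simp [Fin.ext_iff]
      rw [Finset.sum_congr rfl (fun l _ => hc l), Finset.sum_ite_eq' Finset.univ]
      simp
    · rw [dif_neg hi]
      apply Finset.sum_eq_zero
      intro l _
      rw [if_neg]
      have := l.isLt
      omega
  · by_cases hi : 0 < (i:ℕ)
    · rw [if_pos hi]
      have hc : ∀ l : Fin (2*j+1),
          (if (i:ℕ) = (l:ℕ)+1 then Mcoef j ((i:ℕ)-1) * v l else 0)
          = (if l = ⟨(i:ℕ)-1, by omega⟩ then Mcoef j ((i:ℕ)-1) * v l else 0) := by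
        intro l
        congr 1
        simp only [Fin.ext_iff, eq_iff_iff]
        constructor <;> (intro h; omega)
      rw [Finset.sum_congr rfl (fun l _ => hc l), Finset.sum_ite_eq' Finset.univ]
      simp
    · rw [if_neg hi]
      apply Finset.sum_eq_zero
      intro l _
      rw [if_neg]
      omega

lemma Mcoef_odd (j a : ℕ) :
    Mcoef j (2*a+1) = Real.sqrt ((2*(a:ℝ)+1) * (2*(a:ℝ)+2)) := by
  rw [Mcoef, if_pos (by omega)]
  congr 1
  push_cast
  ring

lemma Mcoef_even (j a : ℕ) :
    Mcoef j (2*a) = Real.sqrt ((2*(j:ℝ)-2*(a:ℝ)) * (2*(j:ℝ)-2*(a:ℝ)-1)) := by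
  rw [Mcoef, if_neg (by omega)]
  congr 1
  push_cast
  ring

lemma Lprod (j a : ℕ) (h : a + 2 ≤ j) :
    Mcoef j (2*a+1) * Mcoef j (2*a+2) = sA j 0 a * sB j (a+1) := by
  have hj : (a:ℝ) + 2 ≤ j := by exact_mod_cast h
  have h1 : Mcoef j (2*a+2) = Real.sqrt ((2*(j:ℝ)-2*(a:ℝ)-2) * (2*(j:ℝ)-2*(a:ℝ)-3)) := by
    have := Mcoef_even j (a+1)
    rw [show 2*(a+1) = 2*a+2 from by ring] at this
    rw [this]
    congr 1
    push_cast
    ring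
  rw [Mcoef_odd, h1, sA, sB, ← Real.sqrt_mul (by nlinarith), ← Real.sqrt_mul (Af_nonneg j 0 a (by omega))]
  congr 1
  unfold Af Bf
  push_cast
  ring

lemma Lsq (j a : ℕ) (h : a + 1 ≤ j) :
    Mcoef j (2*a)^2 + Mcoef j (2*a+1)^2 = 4*(j:ℝ)^2 - sA j 0 a ^2 - sB j a ^2 := by
  have hj : (a:ℝ) + 1 ≤ j := by exact_mod_cast h
  rw [Mcoef_odd, Mcoef_even, sA_sq j 0 a (by omega), sB_sq j a (by omega),
    Real.sq_sqrt (by nlinarith), Real.sq_sqrt (by nlinarith)]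
  unfold Af Bf
  push_cast
  ring

noncomputable def evec (j : ℕ) (ε : ℝ) (t : ℕ → ℝ) : ℕ → ℝ := fun m =>
  if m % 2 = 1 then t (m/2)
  else ε⁻¹ * (Mcoef j m * t (m/2) + (if m = 0 then 0 else Mcoef j (m-1) * t ((m-1)/2)))

lemma eig_pos (j k : ℕ) (hk : k + 1 ≤ j) :
    ∃ v : Fin (2*j+1) → ℝ, v ≠ 0 ∧
      (Mq j).mulVec v = (2 * Real.sqrt (((j:ℝ)-(k:ℝ)) * ((j:ℝ)+(k:ℝ)))) • v := by
  obtain ⟨t, hu0, htsupp', htrel'⟩ := exists_good j k hk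
  set ε := 2 * Real.sqrt (((j:ℝ)-(k:ℝ)) * ((j:ℝ)+(k:ℝ))) with hεdef
  have hkj : (k:ℝ) + 1 ≤ j := by exact_mod_cast hk
  have hk0 : (0:ℝ) ≤ k := Nat.cast_nonneg k
  have hprodpos : 0 < ((j:ℝ)-(k:ℝ)) * ((j:ℝ)+(k:ℝ)) := by nlinarith
  have hε : 0 < ε := by
    rw [hεdef]
    have := Real.sqrt_pos.2 hprodpos
    linarith
  have hε2 : ε^2 = 4*(j:ℝ)^2 - 4*(k:ℝ)^2 := by
    rw [hεdef, mul_pow, Real.sq_sqrt hprodpos.le]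
    ring
  have htsupp : ∀ n, j ≤ n → t n = 0 := fun n hn => htsupp' n (by omega)
  have htrel : ∀ a, (sA j 0 a^2 + sB j a^2) * t a
      - sA j 0 a * sB j (a+1) * t (a+1)
      - sA j 0 (a-1) * sB j a * t (a-1)
      = 4*(k:ℝ)^2 * t a := by
    intro a
    have h := htrel' a
    simp only [Xop, XTop] at h
    cases a with
    | zero =>
      simp only [sB_zero, Nat.zero_sub, Nat.sub_self, zero_mul, mul_zero, sub_zero,
        zero_add] at h ⊢
      push_cast at h ⊢
      linear_combination h
    | succ b =>
      simp only [Nat.add_sub_cancel] at h ⊢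
      push_cast at h ⊢
      linear_combination h
  -- the key odd-row identity
  have hodd : ∀ a, a + 1 ≤ j →
      Mcoef j (2*a+1) * (Mcoef j (2*a+2) * t (a+1) + Mcoef j (2*a+1) * t a)
      + Mcoef j (2*a) * (Mcoef j (2*a) * t a
          + (if a = 0 then 0 else Mcoef j (2*a-1) * t (a-1)))
      = ε^2 * t a := by
    intro a ha
    have hx1 : Mcoef j (2*a+1) * Mcoef j (2*a+2) * t (a+1)
        = sA j 0 a * sB j (a+1) * t (a+1) := by
      by_cases h2 : a + 2 ≤ j
      · rw [Lprod j a h2]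
      · rw [htsupp (a+1) (by omega)]
        ring
    have hx2 : Mcoef j (2*a) * (if a = 0 then 0 else Mcoef j (2*a-1) * t (a-1))
        = sA j 0 (a-1) * sB j a * t (a-1) := by
      cases a with
      | zero => simp [sB_zero]
      | succ b =>
        rw [if_neg (by omega)]
        have h1 : 2*(b+1)-1 = 2*b+1 := by omega
        rw [h1, Nat.add_sub_cancel]
        have h2 : 2*(b+1) = 2*b+2 := by ring
        rw [h2, ← mul_assoc, mul_comm (Mcoef j (2*b+2)) (Mcoef j (2*b+1)), Lprod j b (by omega)]
    have h3 := Lsq j a ha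
    rw [hε2]
    linear_combination hx1 + hx2 - htrel a + t a * h3
  refine ⟨fun i => evec j ε t i.val, ?_, ?_⟩
  · intro hzero
    have h1 : evec j ε t 1 = 0 := by
      have := congrFun hzero ⟨1, by omega⟩
      simpa using this
    rw [evec] at h1
    norm_num at h1
    linarith
  · funext i
    obtain ⟨m, him⟩ := i
    rw [Mq_mulVec]
    simp only [Pi.smul_apply, smul_eq_mul, Fin.val_mk]
    by_cases hpar : m % 2 = 1
    · -- odd row
      obtain ⟨a, rfl⟩ : ∃ a, m = 2*a+1 := ⟨m/2, by omega⟩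
      have ha : a + 1 ≤ j := by omega
      rw [dif_pos (by omega), if_pos (by omega)]
      have hv1 : evec j ε t (2*a+1+1)
          = ε⁻¹ * (Mcoef j (2*a+2) * t (a+1) + Mcoef j (2*a+1) * t a) := by
        rw [evec]
        rw [if_neg (by omega)]
        rw [show (2*a+1+1)/2 = a+1 from by omega]
        rw [if_neg (by omega)]
        rw [show (2*a+1+1-1) = 2*a+1 from by omega]
        try rw [show (2*a+1)/2 = a from by omega]
        try rw [show 2*a+1+1 = 2*a+2 from by ring]
      have hv2 : evec j ε t (2*a)
          = ε⁻¹ * (Mcoef j (2*a) * t a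
              + (if a = 0 then 0 else Mcoef j (2*a-1) * t (a-1))) := by
        rw [evec]
        rw [if_neg (by omega)]
        rw [show (2*a)/2 = a from by omega]
        congr 2
        by_cases ha0 : a = 0
        · subst ha0; norm_num
        · rw [if_neg (by omega), if_neg ha0]
          rw [show (2*a-1)/2 = a-1 from by omega]
      have hv0 : evec j ε t (2*a+1) = t a := by
        rw [evec, if_pos (by omega), show (2*a+1)/2 = a from by omega]
      rw [hv1, show 2*a+1-1 = 2*a from by omega, hv2, hv0]
      have := hodd a ha
      field_simp
      linear_combination this
    · -- even row
      have hpar' : m % 2 = 0 := by omega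
      obtain ⟨a, rfl⟩ : ∃ a, m = 2*a := ⟨m/2, by omega⟩
      have hveven : evec j ε t (2*a) = ε⁻¹ * (Mcoef j (2*a) * t a
          + (if 2*a = 0 then 0 else Mcoef j (2*a-1) * t ((2*a-1)/2))) := by
        rw [evec, if_neg (by omega), show (2*a)/2 = a from by omega]
      by_cases hlt : 2*a+1 < 2*j+1
      · rw [dif_pos hlt]
        have hv1 : evec j ε t (2*a+1) = t a := by
          rw [evec, if_pos (by omega), show (2*a+1)/2 = a from by omega]
        rw [hv1]
        by_cases ha0 : a = 0
        · subst ha0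
          rw [if_neg (by omega), hveven]
          try norm_num
          try field_simp
        · rw [if_pos (by omega)]
          have hv2 : evec j ε t (2*a-1) = t (a-1) := by
            rw [evec, if_pos (by omega), show (2*a-1)/2 = a-1 from by omega]
          rw [hv2, hveven, if_neg (by omega)]
          try rw [show (2*a-1)/2 = a-1 from by omega]
          field_simp
          try ring
      · -- m = 2j
        have haj : a = j := by omega
        rw [dif_neg hlt, if_pos (by omega)]
        have hv2 : evec j ε t (2*a-1) = t (a-1) := by
          rw [evec, if_pos (by omega), show (2*a-1)/2 = a-1 from by omega]
        rw [hv2, hveven, if_neg (by omega), show (2*a-1)/2 = a-1 from by omega]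
        rw [htsupp a (by omega)]
        field_simp
        ring

noncomputable def w0 (j : ℕ) : ℕ → ℝ
  | 0 => 1
  | (n+1) => -(Mcoef j (2*n)) * w0 j n / Mcoef j (2*n+1)

lemma Mcoef_odd_pos (j a : ℕ) : 0 < Mcoef j (2*a+1) := by
  rw [Mcoef_odd]
  apply Real.sqrt_pos.2
  positivity

lemma eig_zero (j : ℕ) (hj : 1 ≤ j) :
    ∃ v : Fin (2*j+1) → ℝ, v ≠ 0 ∧ (Mq j).mulVec v = (0:ℝ) • v := by
  refine ⟨fun i => if (i:ℕ) % 2 = 0 then w0 j ((i:ℕ)/2) else 0, ?_, ?_⟩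
  · intro hzero
    have h1 := congrFun hzero ⟨0, by omega⟩
    simp [w0] at h1
  · funext i
    obtain ⟨m, him⟩ := i
    rw [Mq_mulVec]
    simp only [Pi.smul_apply, smul_eq_mul, Fin.val_mk, zero_mul]
    by_cases hpar : m % 2 = 1
    · obtain ⟨a, rfl⟩ : ∃ a, m = 2*a+1 := ⟨m/2, by omega⟩
      rw [dif_pos (show 2*a+1+1 < 2*j+1 by omega)]
      rw [if_pos (show (2*a+1+1) % 2 = 0 by omega)]
      rw [if_pos (show 0 < 2*a+1 by omega)]
      rw [if_pos (show (2*a+1-1) % 2 = 0 by omega)]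
      rw [show (2*a+1+1)/2 = a+1 from by omega]
      rw [show (2*a+1-1)/2 = a from by omega]
      rw [show 2*a+1-1 = 2*a from by omega]
      have hpos := Mcoef_odd_pos j a
      have hw : w0 j (a+1) = -(Mcoef j (2*a)) * w0 j a / Mcoef j (2*a+1) := rfl
      rw [hw]
      field_simp
      ring
    · -- even row: both neighbours odd, vector vanishes there
      have h1 : ∀ (h : m+1 < 2*j+1),
          (if (m+1) % 2 = 0 then w0 j ((m+1)/2) else 0) = 0 := by
        intro h; rw [if_neg (by omega)]
      by_cases hb : m+1 < 2*j+1
      · rw [dif_pos hb, h1 hb]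
        by_cases h0 : 0 < m
        · rw [if_pos h0, if_neg (by omega)]
          ring
        · rw [if_neg h0]
          ring
      · rw [dif_neg hb]
        by_cases h0 : 0 < m
        · rw [if_pos h0, if_neg (by omega)]
          ring
        · rw [if_neg h0]
          ring

lemma eig_neg (j : ℕ) (x : ℝ) (v : Fin (2*j+1) → ℝ)
    (hv : (Mq j).mulVec v = x • v) :
    (Mq j).mulVec (fun i => (-1:ℝ)^(i:ℕ) * v i)
      = (-x) • (fun i : Fin (2*j+1) => (-1:ℝ)^(i:ℕ) * v i) := by
  funext i
  obtain ⟨m, him⟩ := i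
  have key := congrFun hv ⟨m, him⟩
  rw [Mq_mulVec] at key
  rw [Mq_mulVec]
  simp only [Pi.smul_apply, smul_eq_mul, Fin.val_mk] at key ⊢
  cases m with
  | zero =>
    by_cases h1 : 0+1 < 2*j+1
    · rw [dif_pos h1] at key ⊢
      rw [if_neg (by omega)] at key ⊢
      try simp only [Fin.val_mk] at key ⊢
      linear_combination (-1:ℝ) * key
    · rw [dif_neg h1] at key ⊢
      rw [if_neg (by omega)] at key ⊢
      linear_combination (-1:ℝ) * key
  | succ n =>
    simp only [Nat.add_sub_cancel] at key ⊢
    by_cases h1 : n+1+1 < 2*j+1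
    · rw [dif_pos h1] at key ⊢
      rw [if_pos (by omega)] at key ⊢
      try simp only [Fin.val_mk] at key ⊢
      linear_combination ((-1:ℝ)^(n+2)) * key
    · rw [dif_neg h1] at key ⊢
      rw [if_pos (by omega)] at key ⊢
      try simp only [Fin.val_mk] at key ⊢
      linear_combination ((-1:ℝ)^(n+2)) * key

lemma neg_ne_zero_vec (j : ℕ) (v : Fin (2*j+1) → ℝ) (hv : v ≠ 0) :
    (fun i : Fin (2*j+1) => (-1:ℝ)^(i:ℕ) * v i) ≠ 0 := by
  intro h
  apply hv
  funext i
  have := congrFun h i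
  simp only [Pi.zero_apply, mul_eq_zero] at this ⊢
  rcases this with h' | h'
  · exact absurd h' (by positivity)
  · exact h'

lemma spec_subset_roots (j : ℕ) :
    {x : ℝ | ∃ v : Fin (2*j+1) → ℝ, v ≠ 0 ∧ (Mq j).mulVec v = x • v}
      ⊆ ↑((Mq j).charpoly.roots.toFinset) := by
  rintro x ⟨v, hv0, hv⟩
  have hdet : ((Mq j) - x • 1).det = 0 := by
    rw [← Matrix.exists_mulVec_eq_zero_iff]
    refine ⟨v, hv0, ?_⟩
    rw [Matrix.sub_mulVec, Matrix.smul_mulVec, Matrix.one_mulVec, hv, sub_self]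
  have heval : (Mq j).charpoly.eval x
      = ((Matrix.scalar (Fin (2*j+1)) x) - (Mq j)).det := by
    rw [Matrix.charpoly, eval_det, Matrix.matPolyEquiv_charmatrix]
    congr 1
    rw [Polynomial.eval_sub, Polynomial.eval_X, Polynomial.eval_C]
  have hscalar : (Matrix.scalar (Fin (2*j+1)) x) - (Mq j) = -((Mq j) - x • 1) := by
    ext i l
    by_cases h : i = l <;>
      simp [Matrix.scalar_apply, Matrix.diagonal_apply, Matrix.one_apply, h,
        Matrix.sub_apply, Matrix.neg_apply, Matrix.smul_apply] <;> ring
  have hroot : (Mq j).charpoly.eval x = 0 := by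
    rw [heval, hscalar, Matrix.det_neg, hdet, mul_zero]
  simp only [Finset.coe_sort_coe, Finset.mem_coe, Multiset.mem_toFinset]
  rw [Polynomial.mem_roots ((Mq j).charpoly_monic.ne_zero)]
  exact hroot

lemma roots_card_le (j : ℕ) : ((Mq j).charpoly.roots.toFinset).card ≤ 2*j+1 := by
  calc ((Mq j).charpoly.roots.toFinset).card
      ≤ Multiset.card (Mq j).charpoly.roots := Multiset.toFinset_card_le _
    _ ≤ (Mq j).charpoly.natDegree := Polynomial.card_roots' _
    _ = Fintype.card (Fin (2*j+1)) := Matrix.charpoly_natDegree_eq_dim _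
    _ = 2*j+1 := Fintype.card_fin _

noncomputable def fval (j k : ℕ) : ℝ := 2 * Real.sqrt (((j:ℝ)-(k:ℝ)) * ((j:ℝ)+(k:ℝ)))

lemma fval_nonneg (j k : ℕ) : 0 ≤ fval j k := by
  unfold fval
  positivity

lemma fval_j (j : ℕ) : fval j j = 0 := by
  unfold fval
  rw [sub_self, zero_mul, Real.sqrt_zero, mul_zero]

lemma fval_strict (j k1 k2 : ℕ) (h1 : k1 ≤ j) (h2 : k2 ≤ j) (h : k1 < k2) :
    fval j k2 < fval j k1 := by
  unfold fval
  have c1 : (k1:ℝ) < k2 := by exact_mod_cast h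
  have c2 : (k2:ℝ) ≤ j := by exact_mod_cast h2
  have c0 : (0:ℝ) ≤ k1 := Nat.cast_nonneg _
  have hlt : ((j:ℝ)-(k2:ℝ)) * ((j:ℝ)+(k2:ℝ)) < ((j:ℝ)-(k1:ℝ)) * ((j:ℝ)+(k1:ℝ)) := by
    nlinarith
  have := Real.sqrt_lt_sqrt (by nlinarith) hlt
  linarith

noncomputable def eFinset (j : ℕ) : Finset ℝ :=
  ((Finset.range (j+1)).image (fun k => fval j k))
    ∪ ((Finset.range (j+1)).image (fun k => -fval j k))

lemma eFinset_coe (j : ℕ) :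
    (eFinset j : Set ℝ) = {x : ℝ | ∃ k : ℕ, k ≤ j ∧
      (x = 2 * Real.sqrt (((j : ℝ) - (k : ℝ)) * ((j : ℝ) + (k : ℝ))) ∨
       x = -(2 * Real.sqrt (((j : ℝ) - (k : ℝ)) * ((j : ℝ) + (k : ℝ)))))} := by
  ext x
  simp only [eFinset, Finset.coe_union, Set.mem_union, Finset.coe_image,
    Set.mem_image, Finset.mem_coe, Finset.mem_range, Set.mem_setOf_eq]
  constructor
  · rintro (⟨k, hk, rfl⟩ | ⟨k, hk, rfl⟩)
    · exact ⟨k, by omega, Or.inl rfl⟩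
    · exact ⟨k, by omega, Or.inr rfl⟩
  · rintro ⟨k, hk, (rfl | rfl)⟩
    · exact Or.inl ⟨k, by omega, rfl⟩
    · exact Or.inr ⟨k, by omega, rfl⟩

lemma eFinset_card (j : ℕ) (hj : 1 ≤ j) : (eFinset j).card = 2*j+1 := by
  have hinj : ∀ k1 ∈ Finset.range (j+1), ∀ k2 ∈ Finset.range (j+1),
      fval j k1 = fval j k2 → k1 = k2 := by
    intro k1 h1 k2 h2 heq
    simp only [Finset.mem_range] at h1 h2
    rcases lt_trichotomy k1 k2 with h | h | h
    · exact absurd heq (ne_of_gt (fval_strict j k1 k2 (by omega) (by omega) h))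
    · exact h
    · exact absurd heq (ne_of_lt (fval_strict j k2 k1 (by omega) (by omega) h))
  have hinj' : ∀ k1 ∈ Finset.range (j+1), ∀ k2 ∈ Finset.range (j+1),
      -fval j k1 = -fval j k2 → k1 = k2 := by
    intro k1 h1 k2 h2 heq
    exact hinj k1 h1 k2 h2 (by linarith)
  have c1 : ((Finset.range (j+1)).image (fun k => fval j k)).card = j+1 := by
    rw [Finset.card_image_of_injOn hinj, Finset.card_range]
  have c2 : ((Finset.range (j+1)).image (fun k => -fval j k)).card = j+1 := by
    rw [Finset.card_image_of_injOn hinj', Finset.card_range]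
  have hint : ((Finset.range (j+1)).image (fun k => fval j k))
      ∩ ((Finset.range (j+1)).image (fun k => -fval j k)) = {0} := by
    ext x
    simp only [Finset.mem_inter, Finset.mem_image, Finset.mem_range,
      Finset.mem_singleton]
    constructor
    · rintro ⟨⟨k1, hk1, rfl⟩, ⟨k2, hk2, heq⟩⟩
      have h1 := fval_nonneg j k1
      have h2 := fval_nonneg j k2
      linarith
    · rintro rfl
      exact ⟨⟨j, by omega, fval_j j⟩, ⟨j, by omega, by rw [fval_j]; ring⟩⟩
  have := Finset.card_union_add_card_inter
    ((Finset.range (j+1)).image (fun k => fval j k))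
    ((Finset.range (j+1)).image (fun k => -fval j k))
  rw [hint, c1, c2, Finset.card_singleton] at this
  unfold eFinset
  omega

end Stmt12Aux

theorem stmt12 (j : ℕ) (hj : 1 ≤ j) :
    {x : ℝ | ∃ v : Fin (2 * j + 1) → ℝ, v ≠ 0 ∧ (Mq j).mulVec v = x • v}
      = {x : ℝ | ∃ k : ℕ, k ≤ j ∧
          (x = 2 * Real.sqrt (((j : ℝ) - (k : ℝ)) * ((j : ℝ) + (k : ℝ))) ∨
           x = -(2 * Real.sqrt (((j : ℝ) - (k : ℝ)) * ((j : ℝ) + (k : ℝ)))))} ∧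
    {x : ℝ | ∃ k : ℕ, k ≤ j ∧
          (x = 2 * Real.sqrt (((j : ℝ) - (k : ℝ)) * ((j : ℝ) + (k : ℝ))) ∨
           x = -(2 * Real.sqrt (((j : ℝ) - (k : ℝ)) * ((j : ℝ) + (k : ℝ)))))}.ncard
      = 2 * j + 1 := by
  have hTcoe := Stmt12Aux.eFinset_coe j
  have hTcard : {x : ℝ | ∃ k : ℕ, k ≤ j ∧
          (x = 2 * Real.sqrt (((j : ℝ) - (k : ℝ)) * ((j : ℝ) + (k : ℝ))) ∨
           x = -(2 * Real.sqrt (((j : ℝ) - (k : ℝ)) * ((j : ℝ) + (k : ℝ)))))}.ncard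
      = 2 * j + 1 := by
    rw [← hTcoe, Set.ncard_coe_finset, Stmt12Aux.eFinset_card j hj]
  refine ⟨?_, hTcard⟩
  have hTS : {x : ℝ | ∃ k : ℕ, k ≤ j ∧
          (x = 2 * Real.sqrt (((j : ℝ) - (k : ℝ)) * ((j : ℝ) + (k : ℝ))) ∨
           x = -(2 * Real.sqrt (((j : ℝ) - (k : ℝ)) * ((j : ℝ) + (k : ℝ)))))}
      ⊆ {x : ℝ | ∃ v : Fin (2 * j + 1) → ℝ, v ≠ 0 ∧ (Mq j).mulVec v = x • v} := by
    rintro x ⟨k, hk, hx⟩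
    by_cases hkj : k = j
    · have h0 : (2:ℝ) * Real.sqrt (((j:ℝ)-(k:ℝ)) * ((j:ℝ)+(k:ℝ))) = 0 := by
        rw [hkj, sub_self, zero_mul, Real.sqrt_zero, mul_zero]
      obtain ⟨v, hv0, hv⟩ := Stmt12Aux.eig_zero j hj
      rcases hx with rfl | rfl
      · exact ⟨v, hv0, by rw [h0]; exact hv⟩
      · exact ⟨v, hv0, by rw [h0, neg_zero]; exact hv⟩
    · have hk' : k + 1 ≤ j := by omega
      obtain ⟨v, hv0, hv⟩ := Stmt12Aux.eig_pos j k hk'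
      rcases hx with rfl | rfl
      · exact ⟨v, hv0, hv⟩
      · exact ⟨_, Stmt12Aux.neg_ne_zero_vec j v hv0, Stmt12Aux.eig_neg j _ v hv⟩
  have hSR := Stmt12Aux.spec_subset_roots j
  have hSfin : {x : ℝ | ∃ v : Fin (2 * j + 1) → ℝ, v ≠ 0 ∧ (Mq j).mulVec v = x • v}.Finite :=
    Set.Finite.subset (Finset.finite_toSet _) hSR
  have hScard : {x : ℝ | ∃ v : Fin (2 * j + 1) → ℝ, v ≠ 0 ∧ (Mq j).mulVec v = x • v}.ncard
      ≤ 2 * j + 1 := by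
    calc {x : ℝ | ∃ v : Fin (2 * j + 1) → ℝ, v ≠ 0 ∧ (Mq j).mulVec v = x • v}.ncard
        ≤ (↑(((Mq j).charpoly.roots.toFinset)) : Set ℝ).ncard :=
          Set.ncard_le_ncard hSR (Finset.finite_toSet _)
      _ = ((Mq j).charpoly.roots.toFinset).card := Set.ncard_coe_finset _
      _ ≤ 2 * j + 1 := Stmt12Aux.roots_card_le j
  exact (Set.eq_of_subset_of_ncard_le hTS (by rw [hTcard]; exact hScard) hSfin).symm
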